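/- arXiv:2003.09375 — 4 statements merged into one kernel-verified Lean document; each statement's English description precedes it below -/
import Mathlib

section
/- Let N be a positive integer, let Ω be an N × N real positive definite matrix, and let S be an N × N real positive semidefinite matrix. Then tr(Ω⁻¹ · S) · tr(Ω) ≥ (tr(S^{1/2}))², where S^{1/2} denotes the positive semidefinite square root of S. -/
open Matrix in
private lemma trace_conjT_mul_eq_sum (N : ℕ) (A B : Matrix (Fin N) (Fin N) ℝ) :
    (Aᴴ * B).trace = ∑ p : Fin N × Fin N, A p.1 p.2 * B p.1 p.2 := by
  rw [Fintype.sum_prod_type, Matrix.trace]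
  simp only [Matrix.diag, Matrix.mul_apply, Matrix.conjTranspose_apply, star_trivial]
  rw [Finset.sum_comm]

open Matrix in
private lemma psd_sqrt_aux (N : ℕ) (A : Matrix (Fin N) (Fin N) ℝ) (hA : A.PosSemidef) :
    (hA.1.eigenvectorUnitary.1 * diagonal (fun i => Real.sqrt (hA.1.eigenvalues i)) *
      (star hA.1.eigenvectorUnitary : Matrix (Fin N) (Fin N) ℝ)) *
    (hA.1.eigenvectorUnitary.1 * diagonal (fun i => Real.sqrt (hA.1.eigenvalues i)) *
      (star hA.1.eigenvectorUnitary : Matrix (Fin N) (Fin N) ℝ)) = A ∧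
    (hA.1.eigenvectorUnitary.1 * diagonal (fun i => Real.sqrt (hA.1.eigenvalues i)) *
      (star hA.1.eigenvectorUnitary : Matrix (Fin N) (Fin N) ℝ))ᴴ =
    (hA.1.eigenvectorUnitary.1 * diagonal (fun i => Real.sqrt (hA.1.eigenvalues i)) *
      (star hA.1.eigenvectorUnitary : Matrix (Fin N) (Fin N) ℝ)) := by
  constructor
  · have hU := Unitary.coe_star_mul_self hA.1.eigenvectorUnitary
    calc _ = hA.1.eigenvectorUnitary.1 * (diagonal (fun i => Real.sqrt (hA.1.eigenvalues i)) *
          ((star hA.1.eigenvectorUnitary : Matrix (Fin N) (Fin N) ℝ) * hA.1.eigenvectorUnitary.1) *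
          diagonal (fun i => Real.sqrt (hA.1.eigenvalues i))) *
          (star hA.1.eigenvectorUnitary : Matrix (Fin N) (Fin N) ℝ) := by
            simp only [Matrix.mul_assoc]
      _ = hA.1.eigenvectorUnitary.1 * diagonal (RCLike.ofReal ∘ hA.1.eigenvalues) *
          (star hA.1.eigenvectorUnitary : Matrix (Fin N) (Fin N) ℝ) := by
            rw [hU, Matrix.mul_one, diagonal_mul_diagonal]
            have hD : (fun i => Real.sqrt (hA.1.eigenvalues i) * Real.sqrt (hA.1.eigenvalues i)) =
                RCLike.ofReal ∘ hA.1.eigenvalues := by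
              funext i
              simp [Real.mul_self_sqrt (hA.eigenvalues_nonneg i)]
            rw [hD]
      _ = A := by
            conv_rhs => rw [hA.1.spectral_theorem]
            simp
  · simp [Matrix.conjTranspose_mul, Matrix.mul_assoc, Matrix.star_eq_conjTranspose]

open Matrix in
/-- **Cauchy–Schwarz trace inequality (equation (19) of the paper).**
For an `N × N` real positive definite matrix `Ω` and an `N × N` real positive
semidefinite matrix `S`, one has `tr(Ω⁻¹ S) · tr(Ω) ≥ (tr(S^{1/2}))²`, where
`S^{1/2}` is the positive semidefinite square root of `S`. -/
theorem trace_inv_mul_trace_ge_sq_trace_sqrt (N : ℕ) (hN : 0 < N)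
    (Ω S : Matrix (Fin N) (Fin N) ℝ) (hΩ : Ω.PosDef) (hS : S.PosSemidef) :
    (Ω⁻¹ * S).trace * Ω.trace ≥ ((hS.1.eigenvectorUnitary.1 * diagonal (fun i => Real.sqrt (hS.1.eigenvalues i)) *
      (star hS.1.eigenvectorUnitary : Matrix (Fin N) (Fin N) ℝ)).trace) ^ 2 := by
  set R := hΩ.posSemidef.1.eigenvectorUnitary.1 * diagonal (fun i => Real.sqrt (hΩ.posSemidef.1.eigenvalues i)) *
      (star hΩ.posSemidef.1.eigenvectorUnitary : Matrix (Fin N) (Fin N) ℝ) with hRdef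
  set T := hS.1.eigenvectorUnitary.1 * diagonal (fun i => Real.sqrt (hS.1.eigenvalues i)) *
      (star hS.1.eigenvectorUnitary : Matrix (Fin N) (Fin N) ℝ) with hTdef
  have hRR : R * R = Ω := (psd_sqrt_aux N Ω hΩ.posSemidef).1
  have hTT : T * T = S := (psd_sqrt_aux N S hS).1
  have hRH : Rᴴ = R := (psd_sqrt_aux N Ω hΩ.posSemidef).2
  have hTH : Tᴴ = T := (psd_sqrt_aux N S hS).2
  have hdet : R.det * R.det = Ω.det := by rw [← Matrix.det_mul, hRR]
  have hRdet : IsUnit R.det := by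
    refine isUnit_iff_ne_zero.mpr fun h => ?_
    rw [h, mul_zero] at hdet
    exact hΩ.det_pos.ne' hdet.symm
  have hRinv : R⁻¹ * R = 1 := Matrix.nonsing_inv_mul R hRdet
  set A := R⁻¹ * T with hAdef
  have hAH : Aᴴ = T * R⁻¹ := by
    rw [hAdef, Matrix.conjTranspose_mul, hTH, Matrix.conjTranspose_nonsing_inv, hRH]
  have h1 : (Aᴴ * R).trace = T.trace := by
    rw [hAH, Matrix.mul_assoc, hRinv, Matrix.mul_one]
  have h2 : (Aᴴ * A).trace = (Ω⁻¹ * S).trace := by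
    rw [hAH, hAdef]
    have : T * R⁻¹ * (R⁻¹ * T) = T * (Ω⁻¹ * T) := by
      rw [← hRR, Matrix.mul_inv_rev R R]
      simp only [Matrix.mul_assoc]
    rw [this, Matrix.trace_mul_comm, Matrix.mul_assoc, hTT]
  have h3 : (Rᴴ * R).trace = Ω.trace := by rw [hRH, hRR]
  have key := Finset.sum_mul_sq_le_sq_mul_sq Finset.univ
    (fun p : Fin N × Fin N => A p.1 p.2) (fun p : Fin N × Fin N => R p.1 p.2)
  have e1 : (∑ p : Fin N × Fin N, A p.1 p.2 * R p.1 p.2) = T.trace := by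
    rw [← trace_conjT_mul_eq_sum, h1]
  have e2 : (∑ p : Fin N × Fin N, A p.1 p.2 ^ 2) = (Ω⁻¹ * S).trace := by
    rw [← h2, trace_conjT_mul_eq_sum]
    exact Finset.sum_congr rfl fun p _ => (sq _)
  have e3 : (∑ p : Fin N × Fin N, R p.1 p.2 ^ 2) = Ω.trace := by
    rw [← h3, trace_conjT_mul_eq_sum]
    exact Finset.sum_congr rfl fun p _ => (sq _)
  rw [e1, e2, e3] at key
  exact key
end

section
/- Let d and N be positive integers, let W be a d × N real matrix, and let Ω be an N × N real positive definite matrix with tr(Ω) = 1. Then tr(W · Ω⁻¹ · Wᵀ) ≥ (tr((Wᵀ W)^{1/2}))², where (Wᵀ W)^{1/2} denotes the positive semidefinite square root of the positive semidefinite matrix Wᵀ W. -/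
open Matrix in
/-- Frobenius inner product as a trace. -/
lemma trace_transpose_mul_eq_sum {N : ℕ} (M P : Matrix (Fin N) (Fin N) ℝ) :
    (Mᵀ * P).trace = ∑ p : Fin N × Fin N, M p.1 p.2 * P p.1 p.2 := by
  simp only [Matrix.trace, Matrix.diag, Matrix.mul_apply, Matrix.transpose_apply,
    Fintype.sum_prod_type]
  exact Finset.sum_comm ..

open Matrix in
/-- **Lower bound for the multitask regularizer (equation (19) of the paper).**
For a `d × N` real matrix `W` and an `N × N` real positive definite matrix `Ω`
with `tr(Ω) = 1`, one has `tr(W Ω⁻¹ Wᵀ) ≥ (tr((Wᵀ W)^{1/2}))²`, where `R` with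
`R.PosSemidef` and `R * R = Wᵀ * W` is the positive semidefinite square root of
the positive semidefinite matrix `Wᵀ W`. -/
theorem trace_regularizer_ge (d N : ℕ) (hd : 0 < d) (hN : 0 < N)
    (W : Matrix (Fin d) (Fin N) ℝ) (Ω : Matrix (Fin N) (Fin N) ℝ)
    (hΩ : Ω.PosDef) (hΩtr : Ω.trace = 1)
    (R : Matrix (Fin N) (Fin N) ℝ) (hR : R.PosSemidef) (hRsq : R * R = Wᵀ * W) :
    (W * Ω⁻¹ * Wᵀ).trace ≥ R.trace ^ 2 := by
  -- T := square root of Ω⁻¹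
  have hΩinv : (Ω⁻¹).PosDef := hΩ.inv
  open scoped MatrixOrder in
  set T : Matrix (Fin N) (Fin N) ℝ := CFC.sqrt (Ω⁻¹) with hTdef
  have hTT : T * T = Ω⁻¹ := by open scoped MatrixOrder in exact CFC.sqrt_mul_sqrt_self (Ω⁻¹) hΩinv.posSemidef.nonneg
  have hTsym : Tᵀ = T := by open scoped MatrixOrder in exact (CFC.sqrt_nonneg (Ω⁻¹)).posSemidef.1
  -- T is invertible
  have hdetΩ : IsUnit Ω.det := isUnit_iff_ne_zero.2 (ne_of_gt hΩ.det_pos)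
  have hdetT : IsUnit T.det := by
    have : T.det * T.det = (Ω⁻¹).det := by rw [← Matrix.det_mul, hTT]
    have hpos : 0 < (Ω⁻¹).det := hΩinv.det_pos
    refine isUnit_iff_ne_zero.2 fun h => ?_
    rw [h, mul_zero] at this
    exact absurd this.symm (ne_of_gt hpos)
  have hTinv : T * T⁻¹ = 1 := Matrix.mul_nonsing_inv T hdetT
  have hTinvSym : (T⁻¹)ᵀ = T⁻¹ := by
    rw [Matrix.transpose_nonsing_inv, hTsym]
  -- Cauchy–Schwarz with A = T * R, B = T⁻¹
  set A : Matrix (Fin N) (Fin N) ℝ := T * R with hA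
  set B : Matrix (Fin N) (Fin N) ℝ := T⁻¹ with hB
  have hRsym : Rᵀ = R := hR.1
  have hAT : Aᵀ = R * T := by rw [hA, Matrix.transpose_mul, hRsym, hTsym]
  have h1 : (Aᵀ * B).trace = R.trace := by
    rw [hAT, hB, Matrix.mul_assoc, hTinv, Matrix.mul_one]
  have h2 : (Aᵀ * A).trace = (W * Ω⁻¹ * Wᵀ).trace := by
    rw [hAT, hA, Matrix.mul_assoc, ← Matrix.mul_assoc T T R, hTT,
      ← Matrix.mul_assoc, Matrix.trace_mul_cycle, hRsq]
    exact (Matrix.trace_mul_cycle W Ω⁻¹ Wᵀ).symm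
  have h3 : (Bᵀ * B).trace = 1 := by
    rw [hB, hTinvSym, ← Matrix.mul_inv_rev, hTT, Matrix.nonsing_inv_nonsing_inv Ω hdetΩ, hΩtr]
  have hcs := Finset.sum_mul_sq_le_sq_mul_sq Finset.univ
    (fun p : Fin N × Fin N => A p.1 p.2) (fun p : Fin N × Fin N => B p.1 p.2)
  have e1 : (∑ p : Fin N × Fin N, A p.1 p.2 * B p.1 p.2) = R.trace := by
    rw [← trace_transpose_mul_eq_sum, h1]
  have e2 : (∑ p : Fin N × Fin N, A p.1 p.2 ^ 2) = (W * Ω⁻¹ * Wᵀ).trace := by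
    rw [← h2, trace_transpose_mul_eq_sum]; simp [sq]
  have e3 : (∑ p : Fin N × Fin N, B p.1 p.2 ^ 2) = 1 := by
    rw [← h3, trace_transpose_mul_eq_sum]; simp [sq]
  rw [e1, e2, e3, mul_one] at hcs
  exact hcs
end

section
/- Let d and N be positive integers and let W be a d × N real matrix such that Wᵀ W is positive definite (equivalently, W has full column rank), so that tr((Wᵀ W)^{1/2}) > 0. Define Ω* = (Wᵀ W)^{1/2} / tr((Wᵀ W)^{1/2}). Then Ω* is positive definite, tr(Ω*) = 1, and tr(W · (Ω*)⁻¹ · Wᵀ) = (tr((Wᵀ W)^{1/2}))². -/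
open Matrix in
/-- **The optimal structure matrix attains the bound (equation (20) of the paper).**
Let `W` be a `d × N` real matrix with `Wᵀ W` positive definite, let `R` be the
positive semidefinite square root of `Wᵀ W` (so `tr R > 0`), and set
`Ω* = R / tr R`. Then `Ω*` is positive definite, `tr(Ω*) = 1`, and
`tr(W (Ω*)⁻¹ Wᵀ) = (tr((Wᵀ W)^{1/2}))²`. -/
theorem optimal_structure_matrix_attains (d N : ℕ) (hd : 0 < d) (hN : 0 < N)
    (W : Matrix (Fin d) (Fin N) ℝ) (hW : (Wᵀ * W).PosDef)
    (R : Matrix (Fin N) (Fin N) ℝ) (hR : R.PosSemidef) (hRsq : R * R = Wᵀ * W) :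
    0 < R.trace ∧ ((R.trace)⁻¹ • R).PosDef ∧ ((R.trace)⁻¹ • R).trace = 1 ∧
      (W * ((R.trace)⁻¹ • R)⁻¹ * Wᵀ).trace = R.trace ^ 2 := by
  have : Nonempty (Fin N) := ⟨⟨0, hN⟩⟩
  -- R is positive definite
  have Rpd : R.PosDef := by
    refine PosDef.of_dotProduct_mulVec_pos hR.1 fun x hx => lt_of_le_of_ne (hR.dotProduct_mulVec_nonneg x) fun heq => ?_
    have h0 : R *ᵥ x = 0 := (hR.dotProduct_mulVec_zero_iff x).mp heq.symm
    have : (Wᵀ * W) *ᵥ x = 0 := by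
      rw [← hRsq, ← mulVec_mulVec, h0, mulVec_zero]
    have h2 := hW.dotProduct_mulVec_pos hx
    rw [this, dotProduct_zero] at h2
    exact lt_irrefl 0 h2
  have htr : 0 < R.trace := by
    have hdiag : ∀ i, 0 < R i i := fun i => by
      have := Rpd.dotProduct_mulVec_pos (x := Pi.single i 1) (by simp [Pi.single_eq_same, Function.ne_iff])
      simpa [dotProduct, mulVec, Finset.sum_eq_single i, Pi.single_apply] using this
    exact Finset.sum_pos (fun i _ => hdiag i) Finset.univ_nonempty
  have htrne : R.trace ≠ 0 := htr.ne'
  have hdet : IsUnit R.det := Rpd.det_pos.ne'.isUnit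
  have hsmul : ((R.trace)⁻¹ • R).PosDef := by
    refine PosDef.of_dotProduct_mulVec_pos (by rw [Matrix.IsHermitian, conjTranspose_smul, Rpd.1.eq, star_trivial]) fun x hx => ?_
    rw [smul_mulVec, dotProduct_smul, smul_eq_mul]
    exact mul_pos (inv_pos.mpr htr) (Rpd.dotProduct_mulVec_pos hx)
  refine ⟨htr, hsmul, by simp [trace_smul, inv_mul_cancel₀ htrne], ?_⟩
  have hinv : ((R.trace)⁻¹ • R)⁻¹ = R.trace • R⁻¹ := by
    have : Invertible (R.trace)⁻¹ := invertibleOfNonzero (inv_ne_zero htrne)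
    rw [Matrix.inv_smul (A := R) (R.trace)⁻¹ hdet]
    simp [invOf_eq_inv, inv_inv]
  rw [hinv, Matrix.mul_smul, Matrix.smul_mul, trace_smul, smul_eq_mul]
  have : (W * R⁻¹ * Wᵀ).trace = R.trace := by
    rw [trace_mul_cycle, ← hRsq, Matrix.mul_assoc,
      Matrix.mul_nonsing_inv _ hdet, Matrix.mul_one]
  rw [this, sq]
end

section
/- Let d and N be positive integers and let W be a d × N real matrix such that Wᵀ W is positive definite. Then Ω* = (Wᵀ W)^{1/2} / tr((Wᵀ W)^{1/2}) is a minimizer of the function Ω ↦ tr(W · Ω⁻¹ · Wᵀ) over the set of N × N real positive definite matrices Ω with tr(Ω) = 1; that is, Ω* lies in this set and for every positive definite Ω with tr(Ω) = 1 one has tr(W · (Ω*)⁻¹ · Wᵀ) ≤ tr(W · Ω⁻¹ · Wᵀ). -/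
open Matrix

/-- Cauchy–Schwarz for the Frobenius inner product of real matrices. -/
lemma frobenius_cauchy_schwarz {N : ℕ} (A B : Matrix (Fin N) (Fin N) ℝ) :
    (Aᵀ * B).trace ^ 2 ≤ (Aᵀ * A).trace * (Bᵀ * B).trace := by
  have key : ∀ C D : Matrix (Fin N) (Fin N) ℝ,
      (Cᵀ * D).trace = ∑ p : Fin N × Fin N, C p.1 p.2 * D p.1 p.2 := by
    intro C D
    simp only [Matrix.trace, Matrix.diag, Matrix.mul_apply, Matrix.transpose_apply,
      Fintype.sum_prod_type]
    exact Finset.sum_comm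
  rw [key, key, key]
  have := Finset.sum_mul_sq_le_sq_mul_sq Finset.univ
    (fun p : Fin N × Fin N => A p.1 p.2) (fun p : Fin N × Fin N => B p.1 p.2)
  simpa [pow_two] using this

lemma posDef_smul_of_pos {N : ℕ} {M : Matrix (Fin N) (Fin N) ℝ} (hM : M.PosDef)
    {c : ℝ} (hc : 0 < c) : (c • M).PosDef := by
  refine Matrix.PosDef.of_dotProduct_mulVec_pos ?_ fun x hx => ?_
  · have := hM.1
    unfold Matrix.IsHermitian at *
    rw [conjTranspose_smul, this]
    simp
  · rw [smul_mulVec, dotProduct_smul, smul_eq_mul]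
    exact mul_pos hc (hM.dotProduct_mulVec_pos hx)

lemma posDef_trace_pos {N : ℕ} (hN : 0 < N) {M : Matrix (Fin N) (Fin N) ℝ}
    (hM : M.PosDef) : 0 < M.trace := by
  have hdiag : ∀ i, 0 < M i i := by
    intro i
    have hne : (Pi.single i (1:ℝ) : Fin N → ℝ) ≠ 0 := by
      intro h
      have := congrFun h i
      simp at this
    have := hM.dotProduct_mulVec_pos hne
    simpa [Matrix.mulVec_single, single_dotProduct] using this
  exact Finset.sum_pos (fun i _ => hdiag i) ⟨⟨0, hN⟩, Finset.mem_univ _⟩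

open Matrix in
/-- **Solution of the Ω-training subproblem (equations (18)–(20) of the paper).**
Let `W` be a `d × N` real matrix with `Wᵀ W` positive definite and let `R` be the
positive semidefinite square root of `Wᵀ W`. Then `Ω* = R / tr R` is a minimizer
of `Ω ↦ tr(W Ω⁻¹ Wᵀ)` over the `N × N` real positive definite matrices of unit
trace: `Ω*` lies in this set and for every positive definite `Ω` with
`tr(Ω) = 1` one has `tr(W (Ω*)⁻¹ Wᵀ) ≤ tr(W Ω⁻¹ Wᵀ)`. -/
theorem optimal_structure_matrix_minimizes (d N : ℕ) (hd : 0 < d) (hN : 0 < N)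
    (W : Matrix (Fin d) (Fin N) ℝ) (hW : (Wᵀ * W).PosDef)
    (R : Matrix (Fin N) (Fin N) ℝ) (hR : R.PosSemidef) (hRsq : R * R = Wᵀ * W) :
    ((R.trace)⁻¹ • R).PosDef ∧ ((R.trace)⁻¹ • R).trace = 1 ∧
      ∀ Ω : Matrix (Fin N) (Fin N) ℝ, Ω.PosDef → Ω.trace = 1 →
        (W * ((R.trace)⁻¹ • R)⁻¹ * Wᵀ).trace ≤ (W * Ω⁻¹ * Wᵀ).trace := by
  classical
  -- R has nonzero determinant, hence is a unit
  have hdetR : R.det ≠ 0 := by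
    intro h
    have h0 : (Wᵀ * W).det = 0 := by rw [← hRsq, Matrix.det_mul, h, mul_zero]
    exact hW.det_pos.ne' h0
  have hRunitdet : IsUnit R.det := isUnit_iff_ne_zero.mpr hdetR
  have hRunit : IsUnit R := (Matrix.isUnit_iff_isUnit_det R).mpr hRunitdet
  -- R is positive definite
  have hRd : R.PosDef := by
    refine Matrix.PosDef.of_dotProduct_mulVec_pos hR.1 fun x hx => ?_
    have hinj : Function.Injective R.mulVec :=
      Matrix.mulVec_injective_iff_isUnit.mpr hRunit
    have hx' : R *ᵥ x ≠ 0 := by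
      intro h
      exact hx (hinj (by simpa using h))
    have h0 : (0:ℝ) ≤ star x ⬝ᵥ R *ᵥ x := hR.dotProduct_mulVec_nonneg x
    refine lt_of_le_of_ne h0 ?_
    intro h
    exact hx' ((hR.dotProduct_mulVec_zero_iff x).mp h.symm)
  set t := R.trace with ht_def
  have ht : 0 < t := posDef_trace_pos hN hRd
  have htne : t ≠ 0 := ht.ne'
  -- the three claims
  refine ⟨posDef_smul_of_pos hRd (inv_pos.mpr ht), ?_, ?_⟩
  · rw [Matrix.trace_smul, smul_eq_mul, ← ht_def, inv_mul_cancel₀ htne]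
  intro Ω hΩ hΩtr
  -- inverse of the candidate
  have hinv : (t⁻¹ • R)⁻¹ = t • R⁻¹ := by
    apply Matrix.inv_eq_right_inv
    rw [smul_mul_assoc, mul_smul_comm, Matrix.mul_nonsing_inv R hRunitdet, smul_smul,
      inv_mul_cancel₀ htne, one_smul]
  -- value at the candidate equals t^2
  have hRR : (W * R⁻¹ * Wᵀ).trace = t := by
    rw [Matrix.trace_mul_cycle W R⁻¹ Wᵀ, ← hRsq, Matrix.mul_assoc,
      Matrix.mul_nonsing_inv R hRunitdet, Matrix.mul_one]
  have hLHS : (W * (t⁻¹ • R)⁻¹ * Wᵀ).trace = t * t := by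
    rw [hinv, Matrix.mul_smul, Matrix.smul_mul, Matrix.trace_smul, smul_eq_mul, hRR]
  rw [hLHS]
  -- the inverse square root of Ω
  have hΩinv : (Ω⁻¹).PosDef := hΩ.inv
  have hΩdet : IsUnit Ω.det := isUnit_iff_ne_zero.mpr hΩ.det_pos.ne'
  set T := (open scoped MatrixOrder in CFC.sqrt (Ω⁻¹)) with hT_def
  have hTpsd : T.PosSemidef := open scoped MatrixOrder in (CFC.sqrt_nonneg (Ω⁻¹)).posSemidef
  have hTT : T * T = Ω⁻¹ := open scoped MatrixOrder in CFC.sqrt_mul_sqrt_self _ hΩinv.posSemidef.nonneg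
  have hdetT : IsUnit T.det := by
    rw [isUnit_iff_ne_zero]
    intro h
    have h0 : (Ω⁻¹).det = 0 := by rw [← hTT, Matrix.det_mul, h, mul_zero]
    exact hΩinv.det_pos.ne' h0
  have hTsym : Tᵀ = T := by
    have := hTpsd.isHermitian
    rwa [Matrix.IsHermitian, Matrix.conjTranspose_eq_transpose_of_trivial] at this
  have hRsym : Rᵀ = R := by
    have := hR.isHermitian
    rwa [Matrix.IsHermitian, Matrix.conjTranspose_eq_transpose_of_trivial] at this
  have hTiT : T⁻¹ * T = 1 := Matrix.nonsing_inv_mul T hdetT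
  have hTiTi : T⁻¹ * T⁻¹ = Ω := by
    have h := congrArg Inv.inv hTT
    rwa [Matrix.mul_inv_rev, Matrix.nonsing_inv_nonsing_inv Ω hΩdet] at h
  have hTisym : T⁻¹ᵀ = T⁻¹ := by rw [Matrix.transpose_nonsing_inv, hTsym]
  -- Cauchy–Schwarz with A = T⁻¹, B = T * R
  have hcs := frobenius_cauchy_schwarz (T⁻¹) (T * R)
  have e1 : ((T⁻¹)ᵀ * (T * R)).trace = t := by
    rw [hTisym, ← Matrix.mul_assoc, hTiT, Matrix.one_mul]
  have e2 : ((T⁻¹)ᵀ * T⁻¹).trace = 1 := by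
    rw [hTisym, hTiTi, hΩtr]
  have e3 : ((T * R)ᵀ * (T * R)).trace = (W * Ω⁻¹ * Wᵀ).trace := by
    rw [Matrix.transpose_mul, hTsym, hRsym]
    -- trace (R * T * (T * R)) = trace (W * Ω⁻¹ * Wᵀ)
    rw [Matrix.mul_assoc, ← Matrix.mul_assoc T T R, hTT]
    -- trace (R * (Ω⁻¹ * R))
    rw [Matrix.trace_mul_comm, Matrix.mul_assoc]
    -- trace (Ω⁻¹ * (R * R)) = trace (Ω⁻¹ * (Wᵀ * W))
    rw [hRsq, Matrix.trace_mul_comm (Ω⁻¹) (Wᵀ * W), ← Matrix.trace_mul_cycle W Ω⁻¹ Wᵀ]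
  rw [e1, e2, e3, one_mul] at hcs
  calc t * t = t ^ 2 := (sq t).symm
    _ ≤ (W * Ω⁻¹ * Wᵀ).trace := hcs
end
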